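/- Let a(x,y), b(x,y) ∈ ℤ[x,y] be coprime polynomials with b non-constant, so that a(x,y)/b(x,y) is a rational function with integer coefficients that is not a polynomial. Then there is a constant C such that for all large enough N, the number of integer pairs (x₀,y₀) ∈ [-N,N]² with b(x₀,y₀) ≠ 0 for which a(x₀,y₀)/b(x₀,y₀) is an integer is at most C·N^{3/2}. -/

import Mathlib

lemma pow_succ_le (k e : ℕ) (hk : 1 ≤ k) : (e + 1) ^ k ≤ k ^ k * 2 ^ e := by
  have h1 : e + 1 ≤ k * (e / k + 1) := by
    have h2 := Nat.mod_lt e (show 0 < k by omega)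
    have h3 := Nat.div_add_mod e k
    have h4 : k * (e / k + 1) = k * (e / k) + k := by ring
    omega
  calc (e + 1) ^ k ≤ (k * (e / k + 1)) ^ k := Nat.pow_le_pow_left h1 k
    _ = k ^ k * (e / k + 1) ^ k := by rw [Nat.mul_pow]
    _ ≤ k ^ k * (2 ^ (e / k)) ^ k := by
        gcongr
        exact Nat.lt_two_pow_self
    _ = k ^ k * 2 ^ (e / k * k) := by rw [← pow_mul]
    _ ≤ k ^ k * 2 ^ e := by
        gcongr
        · exact one_le_two
        · exact Nat.div_mul_le_self e k

lemma tau_pow_le (k : ℕ) (hk : 1 ≤ k) :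
    ∃ C : ℕ, 1 ≤ C ∧ ∀ n : ℕ, n ≠ 0 → n.divisors.card ^ k ≤ C * n := by
  refine ⟨(k ^ k) ^ (2 ^ k), Nat.one_le_pow _ _ (Nat.one_le_pow _ _ (by omega)), fun n hn => ?_⟩
  rw [Nat.card_divisors hn]
  conv_rhs => rw [← Nat.factorization_prod_pow_eq_self hn]
  simp only [Finsupp.prod, Nat.support_factorization]
  rw [← Finset.prod_pow]
  set s := n.primeFactors with hs
  rw [← Finset.prod_filter_mul_prod_filter_not s (fun p => p < 2 ^ k)]
  rw [← Finset.prod_filter_mul_prod_filter_not s (fun p => p < 2 ^ k) (fun p => p ^ n.factorization p)]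
  have hsmall : ∀ p ∈ s.filter (fun p => p < 2 ^ k),
      (n.factorization p + 1) ^ k ≤ k ^ k * p ^ n.factorization p := by
    intro p hp
    simp only [Finset.mem_filter] at hp
    have hp2 : 2 ≤ p := (Nat.prime_of_mem_primeFactors (hs ▸ hp.1)).two_le
    calc (n.factorization p + 1) ^ k ≤ k ^ k * 2 ^ n.factorization p := pow_succ_le _ _ hk
      _ ≤ k ^ k * p ^ n.factorization p := by gcongr
  have hbig : ∀ p ∈ s.filter (fun p => ¬ p < 2 ^ k),
      (n.factorization p + 1) ^ k ≤ p ^ n.factorization p := by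
    intro p hp
    simp only [Finset.mem_filter, not_lt] at hp
    calc (n.factorization p + 1) ^ k ≤ (2 ^ n.factorization p) ^ k :=
          Nat.pow_le_pow_left Nat.lt_two_pow_self k
      _ = (2 ^ k) ^ n.factorization p := by rw [← pow_mul, ← pow_mul, Nat.mul_comm]
      _ ≤ p ^ n.factorization p := Nat.pow_le_pow_left hp.2 _
  calc (∏ p ∈ s.filter (fun p => p < 2 ^ k), (n.factorization p + 1) ^ k) *
        (∏ p ∈ s.filter (fun p => ¬ p < 2 ^ k), (n.factorization p + 1) ^ k)
      ≤ (∏ p ∈ s.filter (fun p => p < 2 ^ k), k ^ k * p ^ n.factorization p) *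
        (∏ p ∈ s.filter (fun p => ¬ p < 2 ^ k), p ^ n.factorization p) := by
        exact Nat.mul_le_mul (Finset.prod_le_prod' hsmall) (Finset.prod_le_prod' hbig)
    _ = (k ^ k) ^ (s.filter (fun p => p < 2 ^ k)).card *
        ((∏ p ∈ s.filter (fun p => p < 2 ^ k), p ^ n.factorization p) *
         (∏ p ∈ s.filter (fun p => ¬ p < 2 ^ k), p ^ n.factorization p)) := by
        rw [Finset.prod_mul_distrib, Finset.prod_const]; ring
    _ ≤ (k ^ k) ^ (2 ^ k) *
        ((∏ p ∈ s.filter (fun p => p < 2 ^ k), p ^ n.factorization p) *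
         (∏ p ∈ s.filter (fun p => ¬ p < 2 ^ k), p ^ n.factorization p)) := by
        gcongr
        · exact Nat.one_le_pow _ _ (by omega)
        · calc (s.filter (fun p => p < 2 ^ k)).card ≤ (Finset.range (2 ^ k)).card := by
                apply Finset.card_le_card
                intro p hp
                simp only [Finset.mem_filter] at hp
                simpa using hp.2
            _ = 2 ^ k := Finset.card_range _
open MvPolynomial

set_option maxHeartbeats 1000000

noncomputable section
abbrev R1 := MvPolynomial (Fin 1) ℤ

lemma natDegree_multiset_prod_zero {D : Type*} [CommRing D] [IsDomain D]
    (f : Multiset (Polynomial D)) (h : ∀ π ∈ f, π.natDegree = 0) : f.prod.natDegree = 0 := by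
  induction f using Multiset.induction with
  | empty => simp
  | cons π g ih =>
    rw [Multiset.prod_cons]
    have h1 := h π (Multiset.mem_cons_self π g)
    have h2 := ih (fun x hx => h x (Multiset.mem_cons_of_mem hx))
    have h3 := Polynomial.natDegree_mul_le (p := π) (q := g.prod)
    omega

lemma exists_prime_deg_pos {D : Type*} [CommRing D] [IsDomain D] [UniqueFactorizationMonoid D]
    (G : Polynomial D) (hG : 1 ≤ G.natDegree) :
    ∃ π : Polynomial D, Prime π ∧ 1 ≤ π.natDegree ∧ π ∣ G := by
  have hG0 : G ≠ 0 := fun h => by simp [h] at hG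
  obtain ⟨f, hf, hassoc⟩ := UniqueFactorizationMonoid.exists_prime_factors G hG0
  by_contra hcon
  push_neg at hcon
  have hdeg : ∀ π ∈ f, π.natDegree = 0 := by
    intro π hπ
    by_contra hd
    exact absurd (hcon π (hf π hπ) (by omega)) (by
      simpa using (Multiset.dvd_prod hπ).trans hassoc.dvd)
  have hprodd := natDegree_multiset_prod_zero f hdeg
  obtain ⟨u, hu⟩ := hassoc
  have : G.natDegree = 0 := by
    rw [← hu]
    have h3 := Polynomial.natDegree_mul_le (p := f.prod) (q := (u : Polynomial D))
    have h4 := Polynomial.natDegree_eq_zero_of_isUnit u.isUnit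
    omega
  omega

lemma smul_poly_eq {K : Type*} [CommRing K] [Algebra R1 K] (r : R1) (q : Polynomial K) :
    r • q = Polynomial.C (algebraMap R1 K r) * q := by
  ext n
  simp [Polynomial.coeff_smul, Polynomial.coeff_C_mul, Algebra.smul_def]

lemma bezout_exists (a b : MvPolynomial (Fin 2) ℤ)
    (hcop : ∀ h : MvPolynomial (Fin 2) ℤ, h ∣ a → h ∣ b → h.totalDegree = 0)
    (hb : 0 < degreeOf 0 b) :
    ∃ r : R1, r ≠ 0 ∧
      ∃ U V : Polynomial R1,
        U * (finSuccEquiv ℤ 1 a) + V * (finSuccEquiv ℤ 1 b) = Polynomial.C r := by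
  classical
  have ha0 : a ≠ 0 := by
    intro h
    have := hcop b (h ▸ dvd_zero b) dvd_rfl
    have h2 := degreeOf_le_totalDegree b 0
    omega
  have hb0 : b ≠ 0 := by
    intro h
    rw [h] at hb
    simp at hb
  have hA0 : finSuccEquiv ℤ 1 a ≠ 0 := fun h => ha0 (by
    have := congrArg (finSuccEquiv ℤ 1).symm h
    simpa using this)
  have hB0 : finSuccEquiv ℤ 1 b ≠ 0 := fun h => hb0 (by
    have := congrArg (finSuccEquiv ℤ 1).symm h
    simpa using this)
  let K := FractionRing R1
  letI : DecidableEq K := Classical.decEq K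
  let ι : R1 →+* K := algebraMap R1 K
  have hinj : Function.Injective ι := IsFractionRing.injective R1 K
  have hpinj : Function.Injective (Polynomial.map ι) := Polynomial.map_injective ι hinj
  have hA'0 : (finSuccEquiv ℤ 1 a).map ι ≠ 0 := fun h => hA0 (hpinj (by simpa using h))
  have hcoprime : IsCoprime ((finSuccEquiv ℤ 1 a).map ι) ((finSuccEquiv ℤ 1 b).map ι) := by
    by_contra hnc
    have hgu : ¬ IsUnit (EuclideanDomain.gcd ((finSuccEquiv ℤ 1 a).map ι) ((finSuccEquiv ℤ 1 b).map ι)) :=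
      fun h => hnc ((EuclideanDomain.gcd_isUnit_iff).mp h)
    set g := EuclideanDomain.gcd ((finSuccEquiv ℤ 1 a).map ι) ((finSuccEquiv ℤ 1 b).map ι) with hg
    have hgA : g ∣ (finSuccEquiv ℤ 1 a).map ι := EuclideanDomain.gcd_dvd_left _ _
    have hgB : g ∣ (finSuccEquiv ℤ 1 b).map ι := EuclideanDomain.gcd_dvd_right _ _
    have hg0 : g ≠ 0 := by
      intro h
      rw [hg, EuclideanDomain.gcd_eq_zero_iff] at h
      exact hA'0 h.1
    have hgdeg : 1 ≤ g.natDegree := by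
      by_contra hd
      push_neg at hd
      have hd0 : g.natDegree = 0 := by omega
      have hC := Polynomial.eq_C_of_natDegree_eq_zero hd0
      apply hgu
      rw [hC]
      refine Polynomial.isUnit_C.mpr (Ne.isUnit ?_)
      intro h
      exact hg0 (by rw [hC, h, map_zero])
    set M := nonZeroDivisors R1
    set G := IsLocalization.integerNormalization M g with hG
    obtain ⟨c, hc⟩ := IsLocalization.integerNormalization_map_to_map M g
    have hc0 : (c : R1) ≠ 0 := mem_nonZeroDivisors_iff_ne_zero.mp c.2
    have hmapc : (algebraMap R1 K) (c : R1) ≠ 0 := fun h => hc0 (hinj (by simpa using h))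
    have hGdeg : 1 ≤ G.natDegree := by
      have h1 : (G.map ι).natDegree = g.natDegree := by
        rw [hc, smul_poly_eq, Polynomial.natDegree_C_mul hmapc]
      have h2 : (G.map ι).natDegree ≤ G.natDegree := Polynomial.natDegree_map_le
      omega
    obtain ⟨π, hπp, hπd, hπG⟩ := exists_prime_deg_pos G hGdeg
    have hdvd : ∀ P : Polynomial R1, g ∣ P.map ι → π ∣ P := by
      rintro P ⟨h, hh⟩
      set H := IsLocalization.integerNormalization M h with hH
      obtain ⟨e, he⟩ := IsLocalization.integerNormalization_map_to_map M h
      have he0 : (e : R1) ≠ 0 := mem_nonZeroDivisors_iff_ne_zero.mp e.2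
      have key : G * H = Polynomial.C ((c : R1) * (e : R1)) * P := by
        apply hpinj
        rw [Polynomial.map_mul, hc, he, Polynomial.map_mul, Polynomial.map_C, hh,
          smul_poly_eq, smul_poly_eq, map_mul, Polynomial.C_mul]
        ring
      have hπ2 : π ∣ Polynomial.C ((c : R1) * (e : R1)) * P := key ▸ hπG.mul_right H
      rcases hπp.2.2 _ _ hπ2 with h1 | h2
      · exfalso
        have hce : ((c : R1) * (e : R1)) ≠ 0 := mul_ne_zero hc0 he0
        have := Polynomial.natDegree_le_of_dvd h1 (by simpa using hce)
        rw [Polynomial.natDegree_C] at this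
        omega
      · exact h2
    have hπA : π ∣ finSuccEquiv ℤ 1 a := hdvd _ hgA
    have hπB : π ∣ finSuccEquiv ℤ 1 b := hdvd _ hgB
    set h0 := (finSuccEquiv ℤ 1).symm π with hh0
    have h0a : h0 ∣ a := by
      obtain ⟨w, hw⟩ := hπA
      exact ⟨(finSuccEquiv ℤ 1).symm w, by
        have := congrArg (finSuccEquiv ℤ 1).symm hw
        simpa [map_mul] using this⟩
    have h0b : h0 ∣ b := by
      obtain ⟨w, hw⟩ := hπB
      exact ⟨(finSuccEquiv ℤ 1).symm w, by
        have := congrArg (finSuccEquiv ℤ 1).symm hw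
        simpa [map_mul] using this⟩
    have hc0' := hcop h0 h0a h0b
    have hdeg0 : degreeOf 0 h0 = π.natDegree := by
      rw [← natDegree_finSuccEquiv]
      simp [hh0]
    have := degreeOf_le_totalDegree h0 0
    omega
  obtain ⟨u, v, huv⟩ := hcoprime
  set M := nonZeroDivisors R1
  obtain ⟨cu, hcu⟩ := IsLocalization.integerNormalization_map_to_map M u
  obtain ⟨cv, hcv⟩ := IsLocalization.integerNormalization_map_to_map M v
  set U := IsLocalization.integerNormalization M u with hU
  set V := IsLocalization.integerNormalization M v with hV
  refine ⟨(cu : R1) * (cv : R1),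
    mul_ne_zero (mem_nonZeroDivisors_iff_ne_zero.mp cu.2) (mem_nonZeroDivisors_iff_ne_zero.mp cv.2),
    Polynomial.C (cv : R1) * U, Polynomial.C (cu : R1) * V, ?_⟩
  refine hpinj ?_
  rw [Polynomial.map_add, Polynomial.map_mul, Polynomial.map_mul, Polynomial.map_mul,
    Polynomial.map_mul, Polynomial.map_C, Polynomial.map_C, hcu, hcv,
    smul_poly_eq, smul_poly_eq, Polynomial.map_C, map_mul, Polynomial.C_mul]
  trans (Polynomial.C (ι (cu : R1)) * Polynomial.C (ι (cv : R1)) *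
      (u * ((finSuccEquiv ℤ 1 a).map ι) + v * ((finSuccEquiv ℤ 1 b).map ι)))
  · ring
  · rw [huv, mul_one]

def ψ : R1 ≃ₐ[ℤ] Polynomial ℤ :=
  (finSuccEquiv ℤ 0).trans (Polynomial.mapAlgEquiv (isEmptyAlgEquiv ℤ (Fin 0)))

lemma eval1 (t : ℤ) (w : R1) : eval ![t] w = (ψ w).eval t := by
  have h0 : (![t] : Fin 1 → ℤ) = Fin.cons t ![] := by
    funext i
    fin_cases i <;> rfl
  rw [h0, eval_eq_eval_mv_eval']
  congr 1
  simp only [ψ, AlgEquiv.trans_apply]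
  congr 1
  ext i
  · simp
  · exact i.elim0

lemma eval2 (s t : ℤ) (f : MvPolynomial (Fin 2) ℤ) :
    eval ![s, t] f = Polynomial.eval s (Polynomial.map (eval ![t]) (finSuccEquiv ℤ 1 f)) := by
  have h0 : (![s, t] : Fin 2 → ℤ) = Fin.cons s ![t] := by
    funext i
    fin_cases i <;> rfl
  rw [h0, eval_eq_eval_mv_eval']

-- growth bound
lemma natAbs_sum_le' {ι : Type*} (s : Finset ι) (f : ι → ℤ) :
    (∑ i ∈ s, f i).natAbs ≤ ∑ i ∈ s, (f i).natAbs := by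
  induction s using Finset.cons_induction with
  | empty => simp
  | cons a s ha ih =>
    rw [Finset.sum_cons, Finset.sum_cons]
    exact le_trans (Int.natAbs_add_le _ _) (by omega)

lemma poly_growth (P : Polynomial ℤ) :
    ∃ Bp : ℕ, 1 ≤ Bp ∧ ∀ (t : ℤ) (N : ℕ), 1 ≤ N → |t| ≤ (N : ℤ) →
      (P.eval t).natAbs ≤ Bp * N ^ P.natDegree := by
  refine ⟨(∑ i ∈ Finset.range (P.natDegree + 1), (P.coeff i).natAbs) + 1, by omega, ?_⟩
  intro t N hN ht
  rw [Polynomial.eval_eq_sum_range]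
  calc (∑ i ∈ Finset.range (P.natDegree + 1), P.coeff i * t ^ i).natAbs
      ≤ ∑ i ∈ Finset.range (P.natDegree + 1), (P.coeff i * t ^ i).natAbs :=
        natAbs_sum_le' _ _
    _ ≤ ∑ i ∈ Finset.range (P.natDegree + 1), (P.coeff i).natAbs * N ^ P.natDegree := by
        apply Finset.sum_le_sum
        intro i hi
        rw [Int.natAbs_mul, Int.natAbs_pow]
        apply Nat.mul_le_mul_left
        have h1 : t.natAbs ≤ N := by
          rw [Int.abs_eq_natAbs] at ht
          exact_mod_cast ht
        calc t.natAbs ^ i ≤ N ^ i := Nat.pow_le_pow_left h1 i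
          _ ≤ N ^ P.natDegree := Nat.pow_le_pow_right hN (by
              simp only [Finset.mem_range] at hi; omega)
    _ = (∑ i ∈ Finset.range (P.natDegree + 1), (P.coeff i).natAbs) * N ^ P.natDegree := by
        rw [Finset.sum_mul]
    _ ≤ ((∑ i ∈ Finset.range (P.natDegree + 1), (P.coeff i).natAbs) + 1) * N ^ P.natDegree := by
        apply Nat.mul_le_mul_right
        omega

-- integer divisors finset
def intDivisors (z : ℤ) : Finset ℤ :=
  (z.natAbs.divisors.image (fun d : ℕ => (d : ℤ))) ∪ (z.natAbs.divisors.image (fun d : ℕ => -(d : ℤ)))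

lemma mem_intDivisors {z m : ℤ} (hz : z ≠ 0) (hm : m ≠ 0) (h : m ∣ z) : m ∈ intDivisors z := by
  have h1 : m.natAbs ∣ z.natAbs := Int.natAbs_dvd_natAbs.mpr h
  have h2 : m.natAbs ∈ z.natAbs.divisors :=
    Nat.mem_divisors.mpr ⟨h1, Int.natAbs_ne_zero.mpr hz⟩
  rcases Int.natAbs_eq m with he | he
  · exact Finset.mem_union_left _ (Finset.mem_image.mpr ⟨m.natAbs, h2, he.symm⟩)
  · exact Finset.mem_union_right _ (Finset.mem_image.mpr ⟨m.natAbs, h2, he.symm⟩)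

lemma card_intDivisors (z : ℤ) : (intDivisors z).card ≤ 2 * z.natAbs.divisors.card := by
  calc (intDivisors z).card
      ≤ (z.natAbs.divisors.image (fun d : ℕ => (d : ℤ))).card
        + (z.natAbs.divisors.image (fun d : ℕ => -(d : ℤ))).card := Finset.card_union_le _ _
    _ ≤ z.natAbs.divisors.card + z.natAbs.divisors.card :=
        Nat.add_le_add (Finset.card_image_le) (Finset.card_image_le)
    _ = 2 * z.natAbs.divisors.card := by omega

lemma aux_count (a b : MvPolynomial (Fin 2) ℤ)
    (hcop : ∀ h : MvPolynomial (Fin 2) ℤ, h ∣ a → h ∣ b → h.totalDegree = 0)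
    (hb : 0 < degreeOf 0 b) :
    ∃ C : ℝ, ∀ N : ℕ, 1 ≤ N →
      ({p : ℤ × ℤ | |p.1| ≤ (N : ℤ) ∧ |p.2| ≤ (N : ℤ) ∧
          eval ![p.1, p.2] b ≠ 0 ∧ eval ![p.1, p.2] b ∣ eval ![p.1, p.2] a}.ncard : ℝ)
        ≤ C * (N : ℝ) ^ ((3 : ℝ) / 2) := by
  classical
  obtain ⟨rr, hrr0, U, V, hUV⟩ := bezout_exists a b hcop hb
  have hb0 : b ≠ 0 := by intro h; rw [h] at hb; simp at hb
  have hB0 : finSuccEquiv ℤ 1 b ≠ 0 := fun h => hb0 (by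
    have := congrArg (finSuccEquiv ℤ 1).symm h
    simpa using this)
  set d := (finSuccEquiv ℤ 1 b).natDegree with hd
  have hd1 : 1 ≤ d := by
    rw [hd, natDegree_finSuccEquiv]
    omega
  set L := (finSuccEquiv ℤ 1 b).leadingCoeff with hL
  have hL0 : L ≠ 0 := Polynomial.leadingCoeff_ne_zero.mpr hB0
  set dr := (ψ rr).natDegree with hdr
  set k := 2 * dr + 2 with hk
  obtain ⟨Ck, hCk1, hCk⟩ := tau_pow_le k (by omega)
  obtain ⟨Bp, hBp1, hBp⟩ := poly_growth (ψ rr)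
  set Mc := Ck * Bp with hMc
  have hMc1 : 1 ≤ Mc := Nat.one_le_iff_ne_zero.mpr (by positivity)
  set D0 := (ψ (rr * L)).natDegree with hD0
  set M' : ℝ := (Mc : ℝ) ^ ((k : ℝ)⁻¹) with hM'
  have hM'0 : 0 ≤ M' := Real.rpow_nonneg (by positivity) _
  have hW0 : ψ (rr * L) ≠ 0 := fun h => (mul_ne_zero hrr0 hL0) (by
    have := congrArg ψ.symm h
    simpa using this)
  -- key divisibility
  have hkey : ∀ s t : ℤ, eval ![s, t] b ∣ eval ![s, t] a →
      eval ![s, t] b ∣ (ψ rr).eval t := by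
    intro s t hdvd
    have h1 := congrArg (fun P : Polynomial R1 =>
      Polynomial.eval s (P.map (MvPolynomial.eval ![t] : R1 →+* ℤ))) hUV
    simp only [Polynomial.map_add, Polynomial.map_mul, Polynomial.map_C,
      Polynomial.eval_add, Polynomial.eval_mul, Polynomial.eval_C] at h1
    rw [← eval2 s t a, ← eval2 s t b, eval1] at h1
    rw [← h1]
    exact dvd_add (dvd_mul_of_dvd_right hdvd _) (dvd_mul_of_dvd_right dvd_rfl _)
  refine ⟨3 * D0 + 6 * d * M', ?_⟩
  intro N hN
  have hN0 : (0 : ℝ) < (N : ℝ) := by positivity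
  have hN1 : (1 : ℝ) ≤ (N : ℝ) := by exact_mod_cast hN
  -- the finset
  set Box := Finset.Icc (-(N : ℤ)) (N : ℤ) with hBox
  set F := (Box ×ˢ Box).filter (fun p : ℤ × ℤ =>
      eval ![p.1, p.2] b ≠ 0 ∧ eval ![p.1, p.2] b ∣ eval ![p.1, p.2] a) with hF
  have hset : {p : ℤ × ℤ | |p.1| ≤ (N : ℤ) ∧ |p.2| ≤ (N : ℤ) ∧
      eval ![p.1, p.2] b ≠ 0 ∧ eval ![p.1, p.2] b ∣ eval ![p.1, p.2] a} = ↑F := by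
    ext p
    simp only [hF, Set.mem_setOf_eq, Finset.coe_filter, Finset.mem_product, Finset.mem_Icc,
      hBox, Set.mem_setOf_eq, abs_le]
    tauto
  rw [hset, Set.ncard_coe_finset]
  -- fiberwise
  have hmem : ∀ p ∈ F, p.2 ∈ Box := by
    intro p hp
    rw [hF, Finset.mem_filter, Finset.mem_product] at hp
    exact hp.1.2
  have hfib := Finset.card_eq_sum_card_fiberwise hmem
  set Gt : ℤ → Finset ℤ := fun t => Box.filter (fun s =>
      eval ![s, t] b ≠ 0 ∧ eval ![s, t] b ∣ eval ![s, t] a) with hGt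
  have hfibG : ∀ t : ℤ, (F.filter (fun p => p.2 = t)).card ≤ (Gt t).card := by
    intro t
    apply Finset.card_le_card_of_injOn Prod.fst
    · intro p hp
      rw [Finset.mem_coe, Finset.mem_filter] at hp
      obtain ⟨hp1, hp2⟩ := hp
      rw [hF, Finset.mem_filter, Finset.mem_product] at hp1
      rw [Finset.mem_coe, hGt, Finset.mem_filter]
      refine ⟨hp1.1.1, ?_⟩
      rw [← hp2]
      exact hp1.2
    · intro p hp q hq hpq
      rw [Finset.mem_coe, Finset.mem_filter] at hp hq
      exact Prod.ext hpq (hp.2.trans hq.2.symm)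
  have hBoxcard : Box.card = 2 * N + 1 := by
    rw [hBox, Int.card_Icc]
    omega
  have hGt_all : ∀ t : ℤ, (Gt t).card ≤ 2 * N + 1 := by
    intro t
    calc (Gt t).card ≤ Box.card := Finset.card_le_card (Finset.filter_subset _ _)
      _ = 2 * N + 1 := hBoxcard
  -- good t bound
  have hGt_good : ∀ t : ℤ, Polynomial.eval t (ψ (rr * L)) ≠ 0 →
      (Gt t).card ≤ d * (2 * ((ψ rr).eval t).natAbs.divisors.card) := by
    intro t ht
    have hsplit : Polynomial.eval t (ψ (rr * L)) = (ψ rr).eval t * (ψ L).eval t := by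
      rw [map_mul, Polynomial.eval_mul]
    have hz0 : (ψ rr).eval t ≠ 0 := fun h => ht (by rw [hsplit, h, zero_mul])
    have hLt0 : eval ![t] L ≠ 0 := by
      rw [eval1]
      intro h
      exact ht (by rw [hsplit, h, mul_zero])
    set q := Polynomial.map (MvPolynomial.eval ![t] : R1 →+* ℤ) (finSuccEquiv ℤ 1 b) with hq
    have hqd : q.natDegree = d := Polynomial.natDegree_map_of_leadingCoeff_ne_zero _ hLt0
    set z := (ψ rr).eval t with hz
    have hmaps : ∀ s ∈ Gt t, Polynomial.eval s q ∈ intDivisors z := by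
      intro s hs
      rw [hGt, Finset.mem_filter] at hs
      obtain ⟨-, hs1, hs2⟩ := hs
      have hqs : Polynomial.eval s q = eval ![s, t] b := (eval2 s t b).symm
      rw [hqs]
      exact mem_intDivisors hz0 hs1 (hkey s t hs2)
    have hfiber : ∀ m ∈ intDivisors z,
        ((Gt t).filter (fun s => Polynomial.eval s q = m)).card ≤ d := by
      intro m hm
      have hqCm : q - Polynomial.C m ≠ 0 := by
        intro h
        have : q = Polynomial.C m := by
          have := sub_eq_zero.mp h
          exact this
        rw [this, Polynomial.natDegree_C] at hqd
        omega
      calc ((Gt t).filter (fun s => Polynomial.eval s q = m)).card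
          ≤ (q - Polynomial.C m).roots.toFinset.card := by
            apply Finset.card_le_card
            intro s hs
            rw [Finset.mem_filter] at hs
            rw [Multiset.mem_toFinset, Polynomial.mem_roots']
            refine ⟨hqCm, ?_⟩
            rw [Polynomial.IsRoot, Polynomial.eval_sub, Polynomial.eval_C, hs.2, sub_self]
        _ ≤ Multiset.card (q - Polynomial.C m).roots := Multiset.toFinset_card_le _
        _ ≤ (q - Polynomial.C m).natDegree := Polynomial.card_roots' _
        _ ≤ max q.natDegree (Polynomial.C m).natDegree := Polynomial.natDegree_sub_le _ _
        _ ≤ d := by rw [Polynomial.natDegree_C, hqd]; omega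
    calc (Gt t).card ≤ d * (intDivisors z).card :=
          Finset.card_le_mul_card_image_of_maps_to hmaps d hfiber
      _ ≤ d * (2 * z.natAbs.divisors.card) :=
          Nat.mul_le_mul_left d (card_intDivisors z)
  -- tau bound, real
  have htau : ∀ t : ℤ, t ∈ Box → (ψ rr).eval t ≠ 0 →
      (((ψ rr).eval t).natAbs.divisors.card : ℝ) ≤ M' * (N : ℝ) ^ ((1 : ℝ) / 2) := by
    intro t htB hz0
    set z := (ψ rr).eval t with hz
    set τ := z.natAbs.divisors.card with hτ
    have habs : |t| ≤ (N : ℤ) := by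
      rw [hBox, Finset.mem_Icc] at htB
      rw [abs_le]
      omega
    have h1 : τ ^ k ≤ Mc * N ^ dr := by
      calc τ ^ k ≤ Ck * z.natAbs := hCk _ (Int.natAbs_ne_zero.mpr hz0)
        _ ≤ Ck * (Bp * N ^ dr) := Nat.mul_le_mul_left _ (hBp t N hN habs)
        _ = Mc * N ^ dr := by rw [hMc]; ring
    have h2 : ((τ : ℝ)) ^ (k : ℕ) ≤ (Mc : ℝ) * (N : ℝ) ^ (dr : ℕ) := by
      exact_mod_cast h1
    have hk0 : (0 : ℝ) < (k : ℝ) := by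
      rw [hk]; positivity
    have h3 : (τ : ℝ) = (((τ : ℝ)) ^ (k : ℕ)) ^ ((k : ℝ)⁻¹) := by
      rw [← Real.rpow_natCast (τ : ℝ) k, ← Real.rpow_mul (by positivity),
        mul_inv_cancel₀ (ne_of_gt hk0), Real.rpow_one]
    rw [h3]
    calc (((τ : ℝ)) ^ (k : ℕ)) ^ ((k : ℝ)⁻¹)
        ≤ ((Mc : ℝ) * (N : ℝ) ^ (dr : ℕ)) ^ ((k : ℝ)⁻¹) := by
          apply Real.rpow_le_rpow (pow_nonneg (Nat.cast_nonneg _) _) h2 (inv_nonneg.mpr (Nat.cast_nonneg _))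
      _ = M' * ((N : ℝ) ^ (dr : ℕ)) ^ ((k : ℝ)⁻¹) := by
          rw [hM', Real.mul_rpow (by positivity) (by positivity)]
      _ ≤ M' * (N : ℝ) ^ ((1 : ℝ) / 2) := by
          apply mul_le_mul_of_nonneg_left _ hM'0
          rw [← Real.rpow_natCast (N : ℝ) dr, ← Real.rpow_mul (le_of_lt hN0)]
          apply Real.rpow_le_rpow_of_exponent_le hN1
          rw [hk]
          have hkpos : (0:ℝ) < ((2 * dr + 2 : ℕ) : ℝ) := by positivity
          rw [show ((dr:ℝ) * (((2 * dr + 2 : ℕ)):ℝ)⁻¹) = (dr:ℝ) / (((2 * dr + 2 : ℕ)):ℝ) from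
            (div_eq_mul_inv _ _).symm, div_le_div_iff₀ hkpos (by norm_num)]
          push_cast
          nlinarith [Nat.cast_nonneg (α := ℝ) dr]
  -- bad count
  have hbad : (Box.filter (fun t => Polynomial.eval t (ψ (rr * L)) = 0)).card ≤ D0 := by
    calc (Box.filter (fun t => Polynomial.eval t (ψ (rr * L)) = 0)).card
        ≤ (ψ (rr * L)).roots.toFinset.card := by
          apply Finset.card_le_card
          intro t htm
          rw [Finset.mem_filter] at htm
          rw [Multiset.mem_toFinset, Polynomial.mem_roots']
          exact ⟨hW0, htm.2⟩
      _ ≤ Multiset.card (ψ (rr * L)).roots := Multiset.toFinset_card_le _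
      _ ≤ D0 := Polynomial.card_roots' _
  -- assemble
  have hsum : (F.card : ℝ) ≤ (D0 : ℝ) * (2 * N + 1) +
      (2 * N + 1 : ℝ) * (2 * d * (M' * (N : ℝ) ^ ((1 : ℝ) / 2))) := by
    have hfibR : (F.card : ℝ) = ∑ t ∈ Box, ((F.filter (fun p => p.2 = t)).card : ℝ) := by
      rw [hfib]
      push_cast
      rfl
    have hsplit2 : (∑ t ∈ Box, ((F.filter (fun p => p.2 = t)).card : ℝ)) =
        (∑ t ∈ Box.filter (fun t => Polynomial.eval t (ψ (rr * L)) = 0),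
          ((F.filter (fun p => p.2 = t)).card : ℝ)) +
        (∑ t ∈ Box.filter (fun t => ¬ Polynomial.eval t (ψ (rr * L)) = 0),
          ((F.filter (fun p => p.2 = t)).card : ℝ)) :=
      (Finset.sum_filter_add_sum_filter_not Box _ _).symm
    rw [hfibR, hsplit2]
    have hbadsum : (∑ t ∈ Box.filter (fun t => Polynomial.eval t (ψ (rr * L)) = 0),
        ((F.filter (fun p => p.2 = t)).card : ℝ)) ≤ (D0 : ℝ) * (2 * N + 1) := by
      calc (∑ t ∈ Box.filter (fun t => Polynomial.eval t (ψ (rr * L)) = 0),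
          ((F.filter (fun p => p.2 = t)).card : ℝ))
          ≤ ∑ t ∈ Box.filter (fun t => Polynomial.eval t (ψ (rr * L)) = 0),
            ((2 * N + 1 : ℕ) : ℝ) := by
            apply Finset.sum_le_sum
            intro t ht
            exact_mod_cast le_trans (hfibG t) (hGt_all t)
        _ = (Box.filter (fun t => Polynomial.eval t (ψ (rr * L)) = 0)).card
            * ((2 * N + 1 : ℕ) : ℝ) := by rw [Finset.sum_const, nsmul_eq_mul]
        _ ≤ (D0 : ℝ) * (2 * N + 1) := by
            have : ((Box.filter (fun t => Polynomial.eval t (ψ (rr * L)) = 0)).card : ℝ) ≤ D0 := by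
              exact_mod_cast hbad
            push_cast
            nlinarith [Nat.cast_nonneg (α := ℝ) N]
    have hgoodsum : (∑ t ∈ Box.filter (fun t => ¬ Polynomial.eval t (ψ (rr * L)) = 0),
        ((F.filter (fun p => p.2 = t)).card : ℝ)) ≤
        (2 * N + 1 : ℝ) * (2 * d * (M' * (N : ℝ) ^ ((1 : ℝ) / 2))) := by
      calc (∑ t ∈ Box.filter (fun t => ¬ Polynomial.eval t (ψ (rr * L)) = 0),
          ((F.filter (fun p => p.2 = t)).card : ℝ))
          ≤ ∑ t ∈ Box.filter (fun t => ¬ Polynomial.eval t (ψ (rr * L)) = 0),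
            (2 * d * (M' * (N : ℝ) ^ ((1 : ℝ) / 2))) := by
            apply Finset.sum_le_sum
            intro t ht
            rw [Finset.mem_filter] at ht
            have hsplit : Polynomial.eval t (ψ (rr * L)) = (ψ rr).eval t * (ψ L).eval t := by
              rw [map_mul, Polynomial.eval_mul]
            have hz0 : (ψ rr).eval t ≠ 0 := fun h => ht.2 (by rw [hsplit, h, zero_mul])
            have h5 : ((F.filter (fun p => p.2 = t)).card : ℝ)
                ≤ (d : ℝ) * (2 * (((ψ rr).eval t).natAbs.divisors.card : ℝ)) := by
              exact_mod_cast le_trans (hfibG t) (hGt_good t ht.2)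
            calc ((F.filter (fun p => p.2 = t)).card : ℝ)
                ≤ (d : ℝ) * (2 * (((ψ rr).eval t).natAbs.divisors.card : ℝ)) := h5
              _ ≤ (d : ℝ) * (2 * (M' * (N : ℝ) ^ ((1 : ℝ) / 2))) := by
                  apply mul_le_mul_of_nonneg_left _ (by positivity)
                  apply mul_le_mul_of_nonneg_left _ (by norm_num)
                  exact htau t ht.1 hz0
              _ = 2 * d * (M' * (N : ℝ) ^ ((1 : ℝ) / 2)) := by ring
        _ ≤ (2 * N + 1 : ℝ) * (2 * d * (M' * (N : ℝ) ^ ((1 : ℝ) / 2))) := by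
            rw [Finset.sum_const, nsmul_eq_mul]
            apply mul_le_mul_of_nonneg_right _ (by positivity)
            calc ((Box.filter (fun t => ¬ Polynomial.eval t (ψ (rr * L)) = 0)).card : ℝ)
                ≤ (Box.card : ℝ) := by
                  exact_mod_cast Finset.card_le_card (Finset.filter_subset _ _)
              _ = (2 * N + 1 : ℝ) := by rw [hBoxcard]; push_cast; ring
    exact add_le_add hbadsum hgoodsum
  -- final
  have h32 : (N : ℝ) ^ ((3 : ℝ) / 2) = (N : ℝ) * (N : ℝ) ^ ((1 : ℝ) / 2) := by
    rw [show (3 : ℝ) / 2 = 1 + 1 / 2 by norm_num, Real.rpow_add hN0, Real.rpow_one]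
  have hN32 : (N : ℝ) ≤ (N : ℝ) ^ ((3 : ℝ) / 2) := by
    calc (N : ℝ) = (N : ℝ) ^ ((1 : ℝ)) := (Real.rpow_one _).symm
      _ ≤ (N : ℝ) ^ ((3 : ℝ) / 2) := Real.rpow_le_rpow_of_exponent_le hN1 (by norm_num)
  have hhalf : (0 : ℝ) ≤ (N : ℝ) ^ ((1 : ℝ) / 2) := Real.rpow_nonneg (le_of_lt hN0) _
  have hhalf1 : (1 : ℝ) ≤ (N : ℝ) ^ ((1 : ℝ) / 2) := Real.one_le_rpow hN1 (by norm_num)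
  calc (F.card : ℝ) ≤ (D0 : ℝ) * (2 * N + 1) +
      (2 * N + 1 : ℝ) * (2 * d * (M' * (N : ℝ) ^ ((1 : ℝ) / 2))) := hsum
    _ ≤ (3 * D0 + 6 * d * M') * (N : ℝ) ^ ((3 : ℝ) / 2) := by
        rw [h32]
        nlinarith [Nat.cast_nonneg (α := ℝ) D0, Nat.cast_nonneg (α := ℝ) d, hN1, hM'0,
          hhalf, hhalf1, mul_nonneg (Nat.cast_nonneg (α := ℝ) d) hM'0,
          mul_nonneg (mul_nonneg (Nat.cast_nonneg (α := ℝ) d) hM'0) hhalf]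

lemma totalDegree_le_two (b : MvPolynomial (Fin 2) ℤ) :
    b.totalDegree ≤ degreeOf 0 b + degreeOf 1 b := by
  rw [totalDegree]
  refine Finset.sup_le fun m hm => ?_
  have e0 : m 0 ≤ degreeOf 0 b := by
    rw [degreeOf_eq_sup]
    exact Finset.le_sup (f := fun m => m 0) hm
  have e1 : m 1 ≤ degreeOf 1 b := by
    rw [degreeOf_eq_sup]
    exact Finset.le_sup (f := fun m => m 1) hm
  have hsum : (m.sum fun _ e => e) = m 0 + m 1 := by
    rw [Finsupp.sum_fintype]
    · exact Fin.sum_univ_two m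
    · intro i; rfl
  omega

theorem rational_function_integer_values_rare
    (a b : MvPolynomial (Fin 2) ℤ)
    (hcop : ∀ h : MvPolynomial (Fin 2) ℤ, h ∣ a → h ∣ b → h.totalDegree = 0)
    (hb : 0 < b.totalDegree) :
    ∃ C : ℝ, ∃ N₀ : ℕ, ∀ N : ℕ, N₀ ≤ N →
      ({p : ℤ × ℤ | |p.1| ≤ (N : ℤ) ∧ |p.2| ≤ (N : ℤ) ∧
          eval ![p.1, p.2] b ≠ 0 ∧ eval ![p.1, p.2] b ∣ eval ![p.1, p.2] a}.ncard : ℝ)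
        ≤ C * (N : ℝ) ^ ((3 : ℝ) / 2) := by
  classical
  by_cases h0 : 0 < degreeOf 0 b
  · obtain ⟨C, hC⟩ := aux_count a b hcop h0
    exact ⟨C, 1, fun N hN => hC N hN⟩
  · have h1 : 0 < degreeOf 1 b := by
      have := totalDegree_le_two b
      omega
    set sw : Fin 2 → Fin 2 := ⇑(Equiv.swap (0 : Fin 2) 1) with hswdef
    have hswsw : ∀ f : MvPolynomial (Fin 2) ℤ, rename sw (rename sw f) = f := by
      intro f
      rw [rename_rename]
      have : sw ∘ sw = id := by
        funext i
        simp [hswdef, Equiv.swap_apply_self]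
      rw [this, rename_id]
      rfl
    have hb' : 0 < degreeOf 0 (rename sw b) := by
      have h2 := degreeOf_rename_of_injective (p := b) (f := sw)
        (Equiv.swap (0 : Fin 2) 1).injective 1
      have h3 : sw 1 = 0 := by simp [hswdef]
      rw [h3] at h2
      omega
    have hcop' : ∀ h : MvPolynomial (Fin 2) ℤ,
        h ∣ rename sw a → h ∣ rename sw b → h.totalDegree = 0 := by
      intro h hha hhb
      obtain ⟨w, hw⟩ := hha
      obtain ⟨w', hw'⟩ := hhb
      have hda : rename sw h ∣ a := by
        refine ⟨rename sw w, ?_⟩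
        have := congrArg (rename sw) hw
        rw [hswsw, map_mul] at this
        exact this
      have hdb : rename sw h ∣ b := by
        refine ⟨rename sw w', ?_⟩
        have := congrArg (rename sw) hw'
        rw [hswsw, map_mul] at this
        exact this
      have h4 := hcop _ hda hdb
      have h5 : h.totalDegree ≤ (rename sw h).totalDegree := by
        conv_lhs => rw [← hswsw h]
        exact totalDegree_rename_le _ _
      omega
    obtain ⟨C, hC⟩ := aux_count (rename sw a) (rename sw b) hcop' hb'
    refine ⟨C, 1, fun N hN => ?_⟩
    have hswap_eval : ∀ (p : ℤ × ℤ) (f : MvPolynomial (Fin 2) ℤ),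
        eval ![p.1, p.2] (rename sw f) = eval ![p.2, p.1] f := by
      intro p f
      rw [eval_rename]
      have hcomp : (![p.1, p.2] ∘ sw) = ![p.2, p.1] := by
        funext i
        fin_cases i <;> simp [hswdef]
      rw [hcomp]
    have hSeq : {p : ℤ × ℤ | |p.1| ≤ (N : ℤ) ∧ |p.2| ≤ (N : ℤ) ∧
          eval ![p.1, p.2] (rename sw b) ≠ 0 ∧
          eval ![p.1, p.2] (rename sw b) ∣ eval ![p.1, p.2] (rename sw a)} =
        Prod.swap ⁻¹' {p : ℤ × ℤ | |p.1| ≤ (N : ℤ) ∧ |p.2| ≤ (N : ℤ) ∧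
          eval ![p.1, p.2] b ≠ 0 ∧ eval ![p.1, p.2] b ∣ eval ![p.1, p.2] a} := by
      ext p
      simp only [Set.mem_setOf_eq, Set.mem_preimage, Prod.fst_swap, Prod.snd_swap,
        hswap_eval]
      tauto
    have hsurj : Function.Surjective (Prod.swap : ℤ × ℤ → ℤ × ℤ) :=
      fun p => ⟨p.swap, by simp⟩
    have hinj : Function.Injective (Prod.swap : ℤ × ℤ → ℤ × ℤ) := by
      intro p q h
      have := congrArg Prod.swap h
      simpa using this
    have himg : {p : ℤ × ℤ | |p.1| ≤ (N : ℤ) ∧ |p.2| ≤ (N : ℤ) ∧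
          eval ![p.1, p.2] b ≠ 0 ∧ eval ![p.1, p.2] b ∣ eval ![p.1, p.2] a} =
        Prod.swap '' {p : ℤ × ℤ | |p.1| ≤ (N : ℤ) ∧ |p.2| ≤ (N : ℤ) ∧
          eval ![p.1, p.2] (rename sw b) ≠ 0 ∧
          eval ![p.1, p.2] (rename sw b) ∣ eval ![p.1, p.2] (rename sw a)} := by
      rw [hSeq, Set.image_preimage_eq _ hsurj]
    rw [himg, Set.ncard_image_of_injective _ hinj]
    exact hC N hN
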